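/- Let T be a homeomorphism of a compact metric space X. In the proof of the tracing result: if x ∈ CR(X,T) and for every δ > 0 the periodic δ-pseudotrajectory through x (obtained by repeating a finite δ-chain from x to x of period n) is ε-traced by finitely many exact trajectories {T^k(y_m)}, then there exists a point q in the ω-limit set of some y_m with ρ(q, x) ≤ ε. -/
import Mathlib


open Metric Filter Set Topology
open scoped Classical

variable {X : Type*}

/-- A set of naturals is syndetic: bounded gaps. -/
def Syndetic (S : Set ℕ) : Prop := ∃ n : ℕ, ∀ m : ℕ, ∃ k ∈ S, m ≤ k ∧ k ≤ m + n

/-- Forward orbit of a point. -/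
def fwdOrbit (T : X → X) (y : X) : Set X := Set.range fun k : ℕ => T^[k] y

/-- A point is minimal (almost periodic): its forward orbit closure is a minimal set. -/
def IsMinimalPt [TopologicalSpace X] (T : X → X) (y : X) : Prop :=
  ∀ z ∈ closure (fwdOrbit T y), closure (fwdOrbit T z) = closure (fwdOrbit T y)

/-- ℤ-iteration of a homeomorphism. -/
noncomputable def zIter [TopologicalSpace X] (T : X ≃ₜ X) (n : ℤ) : X → X :=
  if 0 ≤ n then (⇑T)^[n.toNat] else (⇑T.symm)^[(-n).toNat]

/-- `A` is an `ε`-network: every point of the space is within `ε` of `A`. -/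
def IsNet [PseudoMetricSpace X] (ε : ℝ) (A : Set X) : Prop :=
  ∀ x : X, ∃ a ∈ A, dist x a ≤ ε

/-- A point is nonwandering (w.r.t. forward iterates). -/
def NonWandering [TopologicalSpace X] (T : X → X) (x : X) : Prop :=
  ∀ U : Set X, IsOpen U → x ∈ U → ∃ k : ℕ, 1 ≤ k ∧ ((fun p => T^[k] p) '' U ∩ U).Nonempty

/-- One-sided `d`-pseudotrajectory. -/
def IsPseudoTraj [PseudoMetricSpace X] (T : X → X) (d : ℝ) (x : ℕ → X) : Prop :=
  ∀ k : ℕ, dist (x (k + 1)) (T (x k)) ≤ d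

/-- Two-sided `d`-pseudotrajectory. -/
def IsPseudoTrajZ [PseudoMetricSpace X] (T : X → X) (d : ℝ) (x : ℤ → X) : Prop :=
  ∀ k : ℤ, dist (x (k + 1)) (T (x k)) ≤ d

/-- A chain recurrent point. -/
def ChainRec [PseudoMetricSpace X] (T : X → X) (x : X) : Prop :=
  ∀ d > (0 : ℝ), ∃ n : ℕ, 1 ≤ n ∧ ∃ c : ℕ → X, c 0 = x ∧ c n = x ∧
    ∀ k < n, dist (c (k + 1)) (T (c k)) ≤ d

/-- ω-limit set of a point under a map. -/
def omegaSet [TopologicalSpace X] (T : X → X) (y : X) : Set X :=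
  {p | ∃ φ : ℕ → ℕ, StrictMono φ ∧ Tendsto (fun n => T^[φ n] y) atTop (nhds p)}

/-- The set of recurrent points (`x ∈ ω(x)`). -/
def RecurrentPts [TopologicalSpace X] (T : X → X) : Set X := {x | x ∈ omegaSet T x}

/-- The multishadowing property (for homeomorphisms, two-sided). -/
def Multishadowing [PseudoMetricSpace X] (T : X ≃ₜ X) : Prop :=
  ∀ ε > (0 : ℝ), ∃ d > (0 : ℝ), ∀ x : ℤ → X, IsPseudoTrajZ (⇑T) d x →
    ∃ Y : Finset X, ∀ k : ℤ, ∃ y ∈ Y, dist (x k) (zIter T k y) < ε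

/-- Topological support of a measure: points all of whose open neighborhoods
have positive measure. -/
def msupp [TopologicalSpace X] [MeasurableSpace X] (μ : MeasureTheory.Measure X) : Set X :=
  {x | ∀ U : Set X, IsOpen U → x ∈ U → 0 < μ U}

/-- Counting function for density computations. -/
noncomputable def cnt (K : Set ℕ) (N : ℕ) : ℝ :=
  ((Finset.range (N + 1)).filter (· ∈ K)).card


theorem stmt18 [MetricSpace X] [CompactSpace X] (T : X ≃ₜ X)
    (x : X) (hx : ChainRec (⇑T) x) (ε δ : ℝ) (hε : 0 < ε) (hδ : 0 < δ)
    (n : ℕ) (hn : 1 ≤ n) (c : ℤ → X)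
    (hper : ∀ k : ℤ, c (k + (n : ℤ)) = c k) (hc0 : c 0 = x)
    (hpseudo : IsPseudoTrajZ (⇑T) δ c)
    (Y : Finset X) (htrace : ∀ k : ℤ, ∃ y ∈ Y, dist (c k) (zIter T k y) ≤ ε) :
    ∃ y ∈ Y, ∃ q ∈ omegaSet (⇑T) y, dist q x ≤ ε := by
  have hzit : ∀ (m : ℕ) (y : X), zIter T (m : ℤ) y = (⇑T)^[m] y := by
    intro m y; simp [zIter]
  have hcx : ∀ j : ℕ, c ((j * n : ℕ) : ℤ) = x := by
    intro j
    induction j with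
    | zero => simpa using hc0
    | succ j ih =>
      have h1 : (((j + 1) * n : ℕ) : ℤ) = ((j * n : ℕ) : ℤ) + (n : ℤ) := by push_cast; ring
      rw [h1, hper, ih]
  have hY : ∀ j : ℕ, ∃ y ∈ Y, dist x ((⇑T)^[j * n] y) ≤ ε := by
    intro j
    obtain ⟨y, hy, hd⟩ := htrace ((j * n : ℕ) : ℤ)
    exact ⟨y, hy, by rwa [hzit (j * n) y, hcx j] at hd⟩
  choose g hg hd using hY
  have : Finite ↥Y := inferInstance
  obtain ⟨y₀, hy₀⟩ := Finite.exists_infinite_fiber (fun j => (⟨g j, hg j⟩ : ↥Y))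
  set p : ℕ → Prop := fun j => (⟨g j, hg j⟩ : ↥Y) = y₀ with hp
  have hS : (setOf p).Infinite := Set.infinite_coe_iff.mp hy₀
  have hmono := Nat.nth_strictMono hS
  have hmem : ∀ i, p (Nat.nth p i) := fun i => Nat.nth_mem_of_infinite hS i
  set b : ℕ → X := fun i => (⇑T)^[(Nat.nth p i) * n] (y₀ : X) with hb
  obtain ⟨q, -, σ, hσ, hconv⟩ := isCompact_univ.tendsto_subseq (fun i => Set.mem_univ (b i))
  have hgval : ∀ i, g (Nat.nth p i) = (y₀ : X) := by
    intro i
    have := hmem i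
    exact congrArg Subtype.val this
  have hbd : ∀ i, dist x (b i) ≤ ε := by
    intro i
    have := hd (Nat.nth p i)
    rwa [hgval i] at this
  refine ⟨(y₀ : X), y₀.2, q, ⟨fun i => (Nat.nth p (σ i)) * n, ?_, ?_⟩, ?_⟩
  · intro i j hij
    exact Nat.mul_lt_mul_of_lt_of_le (hmono (hσ hij)) le_rfl (by omega)
  · exact hconv
  · have htd : Tendsto (fun i => dist (b (σ i)) x) atTop (nhds (dist q x)) :=
      hconv.dist tendsto_const_nhds
    exact le_of_tendsto htd (Filter.Eventually.of_forall fun i => by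
      rw [dist_comm]; exact hbd (σ i))
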